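/- Let (Ω, 𝓕, ℙ) be a probability space and let S : Ω → Matrix(n,n,ℝ) be a random matrix that is almost surely symmetric and positive definite, with entrywise expectation E[S] = I (the identity matrix) and with S⁻¹ entrywise integrable. Then the matrix E[S⁻¹] − I is positive semidefinite. -/

import Mathlib

open Matrix MeasureTheory

lemma quad_int_aux {Ω : Type*} [MeasurableSpace Ω] (ℙ : Measure Ω) {n : ℕ}
    (M : Ω → Matrix (Fin n) (Fin n) ℝ) (hM : ∀ i j, Integrable (fun ω => M ω i j) ℙ)
    (x : Fin n → ℝ) :
    ∫ ω, x ⬝ᵥ (M ω *ᵥ x) ∂ℙ = x ⬝ᵥ ((Matrix.of fun i j => ∫ ω, M ω i j ∂ℙ) *ᵥ x) := by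
  simp only [dotProduct, mulVec, dotProduct, Finset.mul_sum, Matrix.of_apply]
  rw [integral_finset_sum]
  · refine Finset.sum_congr rfl fun i _ => ?_
    rw [integral_finset_sum]
    · refine Finset.sum_congr rfl fun j _ => ?_
      rw [integral_const_mul, integral_mul_const]
    · exact fun j _ => (((hM i j).mul_const (x j)).const_mul (x i))
  · exact fun i _ => integrable_finset_sum _ fun j _ => (((hM i j).mul_const (x j)).const_mul (x i))

lemma quad_integrable_aux {Ω : Type*} [MeasurableSpace Ω] (ℙ : Measure Ω) {n : ℕ}
    (M : Ω → Matrix (Fin n) (Fin n) ℝ) (hM : ∀ i j, Integrable (fun ω => M ω i j) ℙ)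
    (x : Fin n → ℝ) : Integrable (fun ω => x ⬝ᵥ (M ω *ᵥ x)) ℙ := by
  simp only [dotProduct, mulVec, dotProduct, Finset.mul_sum]
  exact integrable_finset_sum _ fun i _ => integrable_finset_sum _ fun j _ =>
    (((hM i j).mul_const (x j)).const_mul (x i))

lemma pointwise_key_aux {n : ℕ} {A : Matrix (Fin n) (Fin n) ℝ} (hA : A.PosDef) (x : Fin n → ℝ) :
    2 * (x ⬝ᵥ x) - x ⬝ᵥ (A *ᵥ x) ≤ x ⬝ᵥ (A⁻¹ *ᵥ x) := by
  have hdet : IsUnit A.det := hA.det_pos.ne'.isUnit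
  have hm : (A - 1)ᴴ * A⁻¹ * (A - 1) = A⁻¹ + A - (2:ℝ) • 1 := by
    rw [conjTranspose_sub, hA.isHermitian.eq, conjTranspose_one, sub_mul,
      Matrix.mul_nonsing_inv _ hdet, sub_mul, mul_sub, mul_sub]
    simp only [Matrix.one_mul, Matrix.mul_one, Matrix.nonsing_inv_mul _ hdet]
    rw [two_smul]
    abel
  have h := (hA.inv.posSemidef.conjTranspose_mul_mul_same (A - 1)).dotProduct_mulVec_nonneg x
  rw [hm] at h
  simp only [star_trivial, sub_mulVec, add_mulVec, smul_mulVec, one_mulVec,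
    dotProduct_sub, dotProduct_add, dotProduct_smul, smul_eq_mul] at h
  linarith

/-- **Matrix Jensen-type inequality (special case of Lemma 2 of the paper).**
If `S` is an almost surely symmetric positive definite random matrix with entrywise
expectation `E[S] = I` and entrywise integrable inverse, then `E[S⁻¹] − I` is
positive semidefinite. -/
theorem expected_inverse_sub_id_posSemidef
    {Ω : Type*} [MeasurableSpace Ω] (ℙ : Measure Ω) [IsProbabilityMeasure ℙ]
    {n : ℕ}
    (S : Ω → Matrix (Fin n) (Fin n) ℝ)
    (hSpd : ∀ᵐ ω ∂ℙ, (S ω).PosDef)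
    (hSmean : (Matrix.of fun i j => ∫ ω, S ω i j ∂ℙ) = 1)
    (hSint : ∀ i j, Integrable (fun ω => S ω i j) ℙ)
    (hSinvint : ∀ i j, Integrable (fun ω => (S ω)⁻¹ i j) ℙ) :
    ((Matrix.of fun i j => ∫ ω, (S ω)⁻¹ i j ∂ℙ) - 1).PosSemidef := by
  refine posSemidef_iff_dotProduct_mulVec.mpr ⟨?_, ?_⟩
  · -- Hermitian
    have herm : ∀ i j, ∫ ω, (S ω)⁻¹ i j ∂ℙ = ∫ ω, (S ω)⁻¹ j i ∂ℙ := by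
      intro i j
      refine integral_congr_ae ?_
      filter_upwards [hSpd] with ω hω
      have := hω.inv.isHermitian
      conv_lhs => rw [← this]
      simp [conjTranspose_apply]
    refine IsHermitian.sub ?_ isHermitian_one
    ext i j
    simp [conjTranspose_apply, herm j i]
  · intro x
    have hle : x ⬝ᵥ x ≤ ∫ ω, x ⬝ᵥ ((S ω)⁻¹ *ᵥ x) ∂ℙ := by
      have h1 : ∫ ω, (2 * (x ⬝ᵥ x) - x ⬝ᵥ (S ω *ᵥ x)) ∂ℙ
          ≤ ∫ ω, x ⬝ᵥ ((S ω)⁻¹ *ᵥ x) ∂ℙ := by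
        refine integral_mono_ae ?_ (quad_integrable_aux ℙ _ hSinvint x) ?_
        · exact ((integrable_const _).sub (quad_integrable_aux ℙ S hSint x))
        · filter_upwards [hSpd] with ω hω
          exact pointwise_key_aux hω x
      have h2 : ∫ ω, (2 * (x ⬝ᵥ x) - x ⬝ᵥ (S ω *ᵥ x)) ∂ℙ = x ⬝ᵥ x := by
        rw [integral_sub (integrable_const _) (quad_integrable_aux ℙ S hSint x),
          integral_const, quad_int_aux ℙ S hSint x, hSmean]
        simp [one_mulVec]
        ring
      linarith
    have := quad_int_aux ℙ (fun ω => (S ω)⁻¹) hSinvint x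
    simp only [star_trivial, sub_mulVec, one_mulVec, dotProduct_sub]
    rw [← this]
    linarith
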